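/- Let ω be a subadditive weight function with Young conjugate φ*_ω, let m > 0, and let G:ℂ→ℂ be an entire function satisfying log|G(z)| ≤ m(1+ω(|z|)) for all z ∈ ℂ. Then for every n ∈ ℕ₀ one has |G^(n)(0)/n!| ≤ e^m · exp(−m·φ*_ω(n/m)). -/

import Mathlib

open MeasureTheory

/-- A subadditive weight function in the sense of Braun–Meise–Taylor. -/
structure IsWeightFunction (ω : ℝ → ℝ) : Prop where
  continuous : Continuous ω
  monotone : MonotoneOn ω (Set.Ici 0)
  nonneg : ∀ t : ℝ, 0 ≤ t → 0 ≤ ω t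
  subadditive : ∀ s t : ℝ, 0 ≤ s → 0 ≤ t → ω (s + t) ≤ ω s + ω t
  integral : IntegrableOn (fun t : ℝ => ω t / (1 + t ^ 2)) (Set.Ioi 0)
  growth : (fun t : ℝ => Real.log (1 + t ^ 2)) =o[Filter.atTop] ω
  convex : ConvexOn ℝ Set.univ fun t : ℝ => ω (Real.exp t)

/-- The Young conjugate `φ*_ω(s) = sup_{t ≥ 0} (s·t − ω(eᵗ))`. -/
noncomputable def youngConj (ω : ℝ → ℝ) (s : ℝ) : ℝ :=
  sSup ((fun t : ℝ => s * t - ω (Real.exp t)) '' Set.Ici 0)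

lemma cauchy_est (G : ℂ → ℂ) (hG : Differentiable ℂ G) (n : ℕ) {R C : ℝ} (hR : 0 < R)
    (hC : ∀ z : ℂ, ‖z‖ = R → ‖G z‖ ≤ C) :
    ‖iteratedDeriv n G 0‖ / (n.factorial : ℝ) ≤ C / R ^ n := by
  have hRnn : (0 : NNReal) < R.toNNReal := by simpa using hR
  have hcoe : ((R.toNNReal : ℝ)) = R := Real.coe_toNNReal R hR.le
  have hp : HasFPowerSeriesOnBall G (cauchyPowerSeries G 0 R) 0 ⊤ := by
    have := hG.hasFPowerSeriesOnBall 0 hRnn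
    rwa [hcoe] at this
  set p := cauchyPowerSeries G 0 R with hpdef
  have h1 : ‖iteratedDeriv n G 0‖ = (n.factorial : ℝ) * ‖p n (fun _ => (1 : ℂ))‖ := by
    rw [iteratedDeriv_eq_iteratedFDeriv, ← hp.factorial_smul (1 : ℂ) n]
    simp [norm_smul]
  have h2 : ‖p n (fun _ => (1 : ℂ))‖ ≤ ‖p n‖ := by
    have := (p n).le_opNorm (fun _ => (1 : ℂ))
    simpa using this
  have h3 : ‖p n‖ ≤ C / R ^ n := by
    have hb := norm_cauchyPowerSeries_le G 0 R n
    have hint : (∫ θ : ℝ in (0)..2 * Real.pi, ‖G (circleMap 0 R θ)‖) ≤ C * (2 * Real.pi) := by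
      have hmono : ∀ θ ∈ Set.Icc (0:ℝ) (2 * Real.pi), ‖G (circleMap 0 R θ)‖ ≤ C := by
        intro θ _
        exact hC _ (by simp [abs_of_pos hR])
      calc (∫ θ : ℝ in (0)..2 * Real.pi, ‖G (circleMap 0 R θ)‖)
          ≤ ∫ _ : ℝ in (0)..2 * Real.pi, C := by
            apply intervalIntegral.integral_mono_on Real.two_pi_pos.le
            · exact ((hG.continuous.comp (continuous_circleMap 0 R)).norm).intervalIntegrable _ _
            · exact intervalIntegrable_const
            · exact hmono
        _ = C * (2 * Real.pi) := by simp [mul_comm]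
    have hC0 : 0 ≤ C := le_trans (norm_nonneg _) (hC (R : ℂ) (by simp [abs_of_pos hR]))
    calc ‖p n‖ ≤ ((2 * Real.pi)⁻¹ * ∫ θ : ℝ in (0)..2 * Real.pi, ‖G (circleMap 0 R θ)‖) * |R|⁻¹ ^ n := hb
      _ ≤ ((2 * Real.pi)⁻¹ * (C * (2 * Real.pi))) * |R|⁻¹ ^ n := by
          apply mul_le_mul_of_nonneg_right
          · exact mul_le_mul_of_nonneg_left hint (by positivity)
          · positivity
      _ = C / R ^ n := by
          rw [abs_of_pos hR, inv_pow]
          field_simp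

  rw [h1, mul_comm, mul_div_assoc, div_self (by exact_mod_cast n.factorial_ne_zero), mul_one]
  exact h2.trans h3


/-- Taylor coefficient bounds for an entire function dominated by
`exp(m(1+ω(|z|)))`. -/
theorem stmt1 (ω : ℝ → ℝ) (hω : IsWeightFunction ω) (m : ℝ) (hm : 0 < m)
    (G : ℂ → ℂ) (hG : Differentiable ℂ G)
    (hGbound : ∀ z : ℂ, ‖G z‖ ≤ Real.exp (m * (1 + ω ‖z‖))) (n : ℕ) :
    ‖iteratedDeriv n G 0‖ / (n.factorial : ℝ) ≤
      Real.exp m * Real.exp (-(m * youngConj ω ((n : ℝ) / m))) := by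
  set s : ℝ := (n : ℝ) / m with hsdef
  have hs : 0 ≤ s := by positivity
  set S : Set ℝ := (fun t : ℝ => s * t - ω (Real.exp t)) '' Set.Ici 0 with hSdef
  have hSne : S.Nonempty := ⟨_, ⟨0, Set.mem_Ici.2 le_rfl, rfl⟩⟩
  -- Bounded above
  have hc : (0 : ℝ) < 2 / (s + 1) := by positivity
  have hev := hω.growth.def hc
  obtain ⟨T, hT⟩ := Filter.eventually_atTop.1 hev
  set T' : ℝ := max T 0 with hT'def
  have hbdd : BddAbove S := by
    refine ⟨max (s * T') 0, ?_⟩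
    rintro x ⟨t, ht, rfl⟩
    simp only [Set.mem_Ici] at ht
    rcases le_total t T' with h | h
    · have hnn : 0 ≤ ω (Real.exp t) := hω.nonneg _ (Real.exp_pos t).le
      have : s * t - ω (Real.exp t) ≤ s * T' := by nlinarith
      exact this.trans (le_max_left _ _)
    · have hT0 : T ≤ T' := le_max_left _ _
      have ht0 : 0 ≤ t := le_trans (le_max_right _ _) h
      have hexp : T ≤ Real.exp t := by
        have := Real.add_one_le_exp t
        linarith [hT0.trans h]
      have hb := hT (Real.exp t) hexp
      have hlog : 2 * t ≤ Real.log (1 + Real.exp t ^ 2) := by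
        have h1 : Real.log (Real.exp t ^ 2) ≤ Real.log (1 + Real.exp t ^ 2) :=
          Real.log_le_log (by positivity) (by linarith)
        rw [Real.log_pow, Real.log_exp] at h1
        simpa [two_mul] using h1.trans' (by push_cast; linarith)
      have hωnn : 0 ≤ ω (Real.exp t) := hω.nonneg _ (Real.exp_pos t).le
      rw [Real.norm_eq_abs, Real.norm_eq_abs,
        abs_of_nonneg (le_trans (by linarith : (0:ℝ) ≤ 2 * t) hlog), abs_of_nonneg hωnn] at hb
      -- ω(e^t) ≥ (s+1)/2 * log(1+e^{2t}) ≥ (s+1) t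
      have hω_ge : (s + 1) * t ≤ ω (Real.exp t) := by
        have h4 : (s + 1) * (2 * t) ≤ (s + 1) * (2 / (s + 1) * ω (Real.exp t)) :=
          mul_le_mul_of_nonneg_left (hlog.trans hb) (by positivity)
        have h5 : (s + 1) * (2 / (s + 1) * ω (Real.exp t)) = 2 * ω (Real.exp t) := by
          field_simp
        rw [h5] at h4
        nlinarith
      have : s * t - ω (Real.exp t) ≤ 0 := by nlinarith
      exact this.trans (le_max_right _ _)
  -- the key estimate for each element of S
  have key : ∀ x ∈ S, ‖iteratedDeriv n G 0‖ / (n.factorial : ℝ) ≤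
      Real.exp m * Real.exp (-(m * x)) := by
    rintro x ⟨t, ht, rfl⟩
    simp only [Set.mem_Ici] at ht
    have hR : (0 : ℝ) < Real.exp t := Real.exp_pos t
    have hC : ∀ z : ℂ, ‖z‖ = Real.exp t → ‖G z‖ ≤ Real.exp (m * (1 + ω (Real.exp t))) := by
      intro z hz
      simpa [hz] using hGbound z
    have h := cauchy_est G hG n hR hC
    refine h.trans (le_of_eq ?_)
    rw [← Real.exp_nat_mul, ← Real.exp_sub, ← Real.exp_add]
    congr 1
    show m * (1 + ω (Real.exp t)) - (n : ℝ) * t = m + -(m * (s * t - ω (Real.exp t)))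
    rw [hsdef]
    field_simp
    ring
  -- conclude
  have hanti : Antitone fun x : ℝ => Real.exp m * Real.exp (-(m * x)) := by
    intro a b hab
    have : -(m * b) ≤ -(m * a) := by nlinarith
    exact mul_le_mul_of_nonneg_left (Real.exp_le_exp.2 this) (Real.exp_pos m).le
  have hcont : ContinuousAt (fun x : ℝ => Real.exp m * Real.exp (-(m * x))) (sSup S) := by
    fun_prop
  have hmap := hanti.map_csSup_of_continuousAt hcont hSne hbdd
  have : youngConj ω s = sSup S := rfl
  rw [this, hmap]
  exact le_csInf (hSne.image _) (by rintro b ⟨x, hx, rfl⟩; exact key x hx)
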